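/- Let τ > 0, let φ, φ₁ ∈ (−π/2, π/2), and let K, K₁ be real numbers with K·τ < −2·cos φ and K₁·τ < −2·cos φ₁. Then the symmetric 2×2 matrix H with rows (K cos φ + cos²φ/τ, (cos φ · cos φ₁)/τ) and ((cos φ · cos φ₁)/τ, K₁ cos φ₁ + cos²φ₁/τ) is negative definite; that is, both diagonal entries are negative and det H > 0, equivalently vᵀ H v < 0 for every nonzero v ∈ ℝ². -/

import Mathlib

open scoped Matrix

/-- Under the defocusing mechanism `Kτ < −2cos φ`, `K₁τ < −2cos φ₁`, the Hessian of the
free path is negative definite: both diagonal entries are negative, its determinant is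
positive, and `vᵀ H v < 0` for every nonzero `v`. -/
theorem free_path_hessian_negative_definite
    (τ φ φ₁ K K₁ : ℝ) (hτ : 0 < τ)
    (hφ : φ ∈ Set.Ioo (-(Real.pi / 2)) (Real.pi / 2))
    (hφ₁ : φ₁ ∈ Set.Ioo (-(Real.pi / 2)) (Real.pi / 2))
    (hK : K * τ < -2 * Real.cos φ) (hK₁ : K₁ * τ < -2 * Real.cos φ₁) :
    let H : Matrix (Fin 2) (Fin 2) ℝ :=
      !![K * Real.cos φ + (Real.cos φ) ^ 2 / τ, Real.cos φ * Real.cos φ₁ / τ;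
         Real.cos φ * Real.cos φ₁ / τ, K₁ * Real.cos φ₁ + (Real.cos φ₁) ^ 2 / τ]
    (H 0 0 < 0 ∧ H 1 1 < 0 ∧ 0 < H.det) ∧
      ∀ v : Fin 2 → ℝ, v ≠ 0 → v ⬝ᵥ H.mulVec v < 0 := by
  intro H
  have hc : 0 < Real.cos φ := Real.cos_pos_of_mem_Ioo hφ
  have hc₁ : 0 < Real.cos φ₁ := Real.cos_pos_of_mem_Ioo hφ₁
  set c := Real.cos φ with hcdef
  set c₁ := Real.cos φ₁ with hc1def
  set a := K * c + c ^ 2 / τ with hadef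
  set d := K₁ * c₁ + c₁ ^ 2 / τ with hddef
  set e := c * c₁ / τ with hedef
  have hdiv : c ^ 2 / τ * τ = c ^ 2 := div_mul_cancel₀ _ hτ.ne'
  have hdiv₁ : c₁ ^ 2 / τ * τ = c₁ ^ 2 := div_mul_cancel₀ _ hτ.ne'
  have hdive : e * τ = c * c₁ := div_mul_cancel₀ _ hτ.ne'
  -- a * τ < -c^2, d * τ < -c₁^2
  have haτ : a * τ < -(c ^ 2) := by rw [hadef]; nlinarith
  have hdτ : d * τ < -(c₁ ^ 2) := by rw [hddef]; nlinarith
  have haneg : a < 0 := by nlinarith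
  have hdneg : d < 0 := by nlinarith
  have hdet : 0 < a * d - e ^ 2 := by
    have h1 : (a * τ) * (d * τ) > (c ^ 2) * (c₁ ^ 2) := by
      nlinarith [sq_nonneg c, sq_nonneg c₁]
    have h2 : (e * τ) ^ 2 = c ^ 2 * c₁ ^ 2 := by rw [hdive]; ring
    nlinarith [sq_nonneg τ, mul_pos hτ hτ]
  have hH00 : H 0 0 = a := by simp [H]; rfl
  have hH11 : H 1 1 = d := by simp [H]; rfl
  have hDet : H.det = a * d - e ^ 2 := by
    simp [H, Matrix.det_fin_two_of]; ring
  refine ⟨⟨by rw [hH00]; exact haneg, by rw [hH11]; exact hdneg, by rw [hDet]; exact hdet⟩, ?_⟩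
  intro v hv
  have hQ : v ⬝ᵥ H.mulVec v = a * (v 0) ^ 2 + 2 * e * (v 0) * (v 1) + d * (v 1) ^ 2 := by
    simp [H, Matrix.mulVec, dotProduct, Fin.sum_univ_two, Matrix.vecHead, Matrix.vecTail, a, d, e, c, c₁]; ring
  rw [hQ]
  clear_value a d e
  clear hQ hDet hH00 hH11 hdive hdiv hdiv₁ haτ hdτ hadef hddef hedef hK hK₁ H
  rcases eq_or_ne (v 1) 0 with h1 | h1
  · have h0 : v 0 ≠ 0 := by
      intro h0
      apply hv
      funext i; fin_cases i <;> assumption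
    have h2 : 0 < (v 0) ^ 2 := by positivity
    rw [h1]
    nlinarith [mul_neg_of_neg_of_pos haneg h2]
  · have hv1 : 0 < (v 1) ^ 2 := by positivity
    have key : 0 < a * (a * (v 0) ^ 2 + 2 * e * (v 0) * (v 1) + d * (v 1) ^ 2) := by
      nlinarith [sq_nonneg (a * v 0 + e * v 1), mul_pos hdet hv1]
    nlinarith [key, haneg]
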